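/- Let {B_k}_{k=1}^K be operators on a finite-dimensional Hilbert space with ∑_k B_k† B_k = 1 + δD where δ > 0, D is Hermitian, and ‖1 + δD‖_∞ ≤ 4. Define B_k' := B_k(1 − (δ/2)D). Then ∑_k (B_k')† B_k' ≤ 1, i.e., the map ∑_k B_k' • (B_k')† is completely positive and trace non-increasing. -/

import Mathlib

open Matrix
open scoped ComplexOrder

lemma aux_smul_psd {d : ℕ} (c : ℝ) (hc : 0 ≤ c) {M : Matrix (Fin d) (Fin d) ℂ}
    (hM : M.PosSemidef) : ((c:ℂ) • M).PosSemidef := by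
  rw [posSemidef_iff_dotProduct_mulVec]
  constructor
  · unfold Matrix.IsHermitian
    rw [conjTranspose_smul, hM.1, Complex.star_def, Complex.conj_ofReal]
  · intro x
    rw [smul_mulVec, dotProduct_smul, smul_eq_mul]
    exact mul_nonneg (by exact_mod_cast hc) (hM.dotProduct_mulVec_nonneg x)

lemma aux_norm_psd {d : ℕ} (M : Matrix (Fin d) (Fin d) ℂ) (hM : Mᴴ = M) (c : ℝ)
    (hn : ‖Matrix.toEuclideanCLM (𝕜 := ℂ) M‖ ≤ c) :
    ((c:ℂ) • 1 - M).PosSemidef := by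
  rw [posSemidef_iff_dotProduct_mulVec]
  constructor
  · unfold Matrix.IsHermitian
    rw [conjTranspose_sub, conjTranspose_smul, conjTranspose_one, hM,
      Complex.star_def, Complex.conj_ofReal]
  · intro x
    set x' : EuclideanSpace ℂ (Fin d) := (WithLp.equiv 2 _).symm x with hx'
    set z : ℂ := star x ⬝ᵥ (M *ᵥ x) with hzdef
    have hz : z = inner ℂ x' (Matrix.toEuclideanCLM (𝕜 := ℂ) M x') := by
      rw [hx', WithLp.equiv_symm_apply, toEuclideanCLM_toLp, EuclideanSpace.inner_toLp_toLp]
      rw [hzdef, dotProduct_comm]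
    have hzre : z.re ≤ c * ‖x'‖ ^ 2 := by
      calc z.re ≤ ‖z‖ := Complex.re_le_norm z
        _ ≤ ‖x'‖ * ‖Matrix.toEuclideanCLM (𝕜 := ℂ) M x'‖ := by
            rw [hz]; exact norm_inner_le_norm _ _
        _ ≤ ‖x'‖ * (‖Matrix.toEuclideanCLM (𝕜 := ℂ) M‖ * ‖x'‖) :=
            mul_le_mul_of_nonneg_left ((Matrix.toEuclideanCLM (𝕜 := ℂ) M).le_opNorm x')
              (norm_nonneg _)
        _ ≤ c * ‖x'‖ ^ 2 := by
            rw [pow_two]; nlinarith [norm_nonneg x', (Matrix.toEuclideanCLM (𝕜 := ℂ) M).opNorm_nonneg]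
    have hzim : z.im = 0 := by
      have hst : star z = z := by
        nth_rewrite 1 [hzdef]
        rw [star_dotProduct, star_star, star_mulVec, hM, ← dotProduct_mulVec, ← hzdef]
      have := congrArg Complex.im hst
      simp only [Complex.star_def, Complex.conj_im] at this
      linarith
    have hxx : star x ⬝ᵥ x = ((‖x'‖ ^ 2 : ℝ) : ℂ) := by
      rw [dotProduct_comm, ← EuclideanSpace.inner_toLp_toLp, ← WithLp.equiv_symm_apply, ← hx', inner_self_eq_norm_sq_to_K]
      norm_num
    rw [sub_mulVec, dotProduct_sub, smul_mulVec, one_mulVec, dotProduct_smul,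
      smul_eq_mul, hxx, ← hzdef, ← Complex.ofReal_mul]
    rw [Complex.le_def]
    constructor
    · simp only [Complex.zero_re, Complex.sub_re, Complex.ofReal_re]
      linarith
    · simp only [Complex.zero_im, Complex.sub_im, Complex.ofReal_im, hzim]
      ring

/-- The `ℓ²` operator norm of a matrix. -/
noncomputable def opNorm {d : ℕ} (A : Matrix (Fin d) (Fin d) ℂ) : ℝ :=
  ‖Matrix.toEuclideanCLM (𝕜 := ℂ) A‖

/-- If `∑ₖ Bₖ†Bₖ = 1 + δD` with `D` Hermitian, `δ > 0`, and `‖1 + δD‖_∞ ≤ 4`, then the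
corrected Kraus operators `Bₖ' = Bₖ(1 − (δ/2)D)` satisfy `∑ₖ Bₖ'†Bₖ' ≤ 1`, i.e. the map
`∑ₖ Bₖ' • Bₖ'†` is trace non-increasing. -/
theorem corrected_kraus_trace_nonincreasing {d K : ℕ}
    (B : Fin K → Matrix (Fin d) (Fin d) ℂ) (D : Matrix (Fin d) (Fin d) ℂ)
    (δ : ℝ) (hδ : 0 < δ) (hD : Dᴴ = D)
    (hsum : ∑ k, (B k)ᴴ * B k = 1 + (δ : ℂ) • D)
    (hnorm : opNorm (1 + (δ : ℂ) • D) ≤ 4) :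
    ((1 : Matrix (Fin d) (Fin d) ℂ)
      - ∑ k, (B k * (1 - ((δ/2 : ℝ) : ℂ) • D))ᴴ * (B k * (1 - ((δ/2 : ℝ) : ℂ) • D))).PosSemidef := by
  set C : Matrix (Fin d) (Fin d) ℂ := 1 - ((δ/2 : ℝ) : ℂ) • D with hC
  have hCH : Cᴴ = C := by
    rw [hC, conjTranspose_sub, conjTranspose_smul, conjTranspose_one, hD,
      Complex.star_def, Complex.conj_ofReal]
  have hS : ∑ k, (B k * C)ᴴ * (B k * C) = Cᴴ * ((∑ k, (B k)ᴴ * B k) * C) := by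
    simp only [conjTranspose_mul, Finset.sum_mul, ← Finset.mul_sum, mul_assoc]
  rw [hS, hCH, hsum, hC]
  have key : (1 : Matrix (Fin d) (Fin d) ℂ)
      - (1 - ((δ/2 : ℝ) : ℂ) • D) * ((1 + (δ : ℂ) • D) * (1 - ((δ/2 : ℝ) : ℂ) • D))
      = ((δ^2/4 : ℝ) : ℂ) • (Dᴴ * ((((4:ℝ)) : ℂ) • 1 - (1 + (δ : ℂ) • D)) * D) := by
    rw [hD]
    push_cast
    simp only [mul_sub, sub_mul, mul_add, add_mul, smul_mul_assoc, mul_smul_comm,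
      smul_smul, mul_one, one_mul, smul_sub, smul_add, mul_assoc]
    module
  rw [key]
  refine aux_smul_psd _ (by positivity) ?_
  refine Matrix.PosSemidef.conjTranspose_mul_mul_same ?_ D
  exact aux_norm_psd _ (by
      rw [conjTranspose_add, conjTranspose_one, conjTranspose_smul, hD,
        Complex.star_def, Complex.conj_ofReal]) 4 hnorm
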